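/- Every chores-only lexicographic instance admits a complete allocation that is simultaneously EFX and Pareto optimal. -/

import Mathlib

attribute [local instance 10] Classical.propDecidable

/-- A lexicographic mixed instance: each agent `i` has a set `G i` of goods
(its complement being the chores `C i`) and a strict linear importance order
`⊳_i` on the items, encoded as a linear order where larger means more important. -/
structure LexInstance (N M : Type) [Fintype N] [Fintype M] [DecidableEq M] where
  G : N → Finset M
  ord : N → LinearOrder M

namespace LexInstance

variable {N M : Type} [Fintype N] [Fintype M] [DecidableEq M]

/-- `inst.imp i a b` means `a ⊳_i b` : `a` is more important than `b` for agent `i`. -/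
def imp (inst : LexInstance N M) (i : N) (a b : M) : Prop := (inst.ord i).lt b a

/-- The chores of agent `i`. -/
def C (inst : LexInstance N M) (i : N) : Finset M := (inst.G i)ᶜ

/-- Strict lexicographic preference `X ≻_i Y`. -/
def SPref (inst : LexInstance N M) (i : N) (X Y : Finset M) : Prop :=
  (∃ g ∈ inst.G i ∩ (X \ Y), ∀ o ∈ Y ∩ inst.G i, inst.imp i o g → o ∈ X) ∨
  (∃ c ∈ inst.C i ∩ (Y \ X), ∀ o ∈ X ∩ inst.C i, inst.imp i o c → o ∈ Y)

/-- Weak lexicographic preference `X ⪰_i Y`. -/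
def WPref (inst : LexInstance N M) (i : N) (X Y : Finset M) : Prop :=
  inst.SPref i X Y ∨ X = Y

/-- A (complete) allocation: pairwise disjoint bundles whose union is all of `M`. -/
def IsAllocation (_inst : LexInstance N M) (A : N → Finset M) : Prop :=
  (∀ i j, i ≠ j → Disjoint (A i) (A j)) ∧ ∀ o : M, ∃ i, o ∈ A i

/-- Pareto optimality of a (complete) allocation. -/
def ParetoOptimal (inst : LexInstance N M) (A : N → Finset M) : Prop :=
  ¬ ∃ B : N → Finset M, inst.IsAllocation B ∧
      (∀ i, inst.WPref i (B i) (A i)) ∧ ∃ h, inst.SPref h (B h) (A h)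

/-- The item agent `i` picks from the remaining set `R`: its `⊳_i`-greatest
remaining good if there is one, and otherwise the `⊳_i`-least remaining item. -/
noncomputable def pickOne (inst : LexInstance N M) (i : N) (R : Finset M)
    (h : R.Nonempty) : M :=
  if hg : (R ∩ inst.G i).Nonempty then @Finset.max' M (inst.ord i) (R ∩ inst.G i) hg
  else @Finset.min' M (inst.ord i) R h

/-- Run the picking procedure along a sequence of agents, starting from the
remaining items `R`; returns the resulting bundles. -/
noncomputable def runPick (inst : LexInstance N M) : List N → Finset M → N → Finset M
  | [], _ => fun _ => ∅
  | i :: rest, R =>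
    if h : R.Nonempty then
      fun j =>
        runPick inst rest (R.erase (inst.pickOne i R h)) j ∪
          (if j = i then {inst.pickOne i R h} else ∅)
    else fun _ => ∅

/-- An allocation is sequencible if it is produced by some picking sequence of
length `|M|` starting from all items. -/
def Sequencible (inst : LexInstance N M) (A : N → Finset M) : Prop :=
  ∃ s : List N, s.length = Fintype.card M ∧ inst.runPick s Finset.univ = A

/-- A chores-only instance: every item is a chore for every agent. -/
def ChoresOnly (inst : LexInstance N M) : Prop := ∀ i, inst.G i = ∅

/-- Envy-freeness up to any item. -/
def EFX (inst : LexInstance N M) (A : N → Finset M) : Prop :=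
  ∀ i h : N,
    (∀ o ∈ A h ∩ inst.G i, inst.WPref i (A i) ((A h).erase o)) ∧
    (∀ o ∈ A i ∩ inst.C i, inst.WPref i ((A i).erase o) (A h))

/-- Envy-freeness up to any chore. -/
def EFXc (inst : LexInstance N M) (A : N → Finset M) : Prop :=
  ∀ i h : N, ∀ o ∈ A i ∩ inst.C i, inst.WPref i ((A i).erase o) (A h)

/-- Envy-freeness up to one item. -/
def EF1 (inst : LexInstance N M) (A : N → Finset M) : Prop :=
  ∀ i h : N, ((A i ∩ inst.C i) ∪ (A h ∩ inst.G i)).Nonempty →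
    ∃ o ∈ (A i ∩ inst.C i) ∪ (A h ∩ inst.G i),
      inst.WPref i (A i) ((A h).erase o) ∨ inst.WPref i ((A i).erase o) (A h)

/-- `A` gives every agent at least its maximin share: for every partition `P`
of the items into `n` bundles, agent `i` weakly prefers `A i` to some bundle of
`P` (hence to the `⪰_i`-least bundle of `P`). -/
def MMSfair (inst : LexInstance N M) (A : N → Finset M) : Prop :=
  ∀ i, ∀ P : N → Finset M, inst.IsAllocation P → ∃ j, inst.WPref i (A i) (P j)

/-- `B` is the maximin share `MMS_i` of agent `i`: `B` is the `⪰_i`-least bundle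
of some partition of `M` into `n` bundles, and every such partition contains a
bundle to which `B` is weakly preferred. -/
def IsMMSBundle (inst : LexInstance N M) (i : N) (B : Finset M) : Prop :=
  (∃ P : N → Finset M, inst.IsAllocation P ∧ (∃ j, P j = B) ∧
      ∀ j, inst.WPref i (P j) B) ∧
  (∀ P : N → Finset M, inst.IsAllocation P → ∃ j, inst.WPref i B (P j))

/-- The `k`-th (0-indexed) `⊳_i`-greatest good of agent `i`, if any. -/
noncomputable def kthGood (inst : LexInstance N M) (i : N) (k : ℕ) : Option M :=
  letI : LinearOrder M := inst.ord i
  (((inst.G i).sort (· ≤ ·)).reverse)[k]?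

/-- The `k`-th (0-indexed) `⊳_i`-least chore of agent `i`, if any. -/
noncomputable def kthChore (inst : LexInstance N M) (i : N) (k : ℕ) : Option M :=
  letI : LinearOrder M := inst.ord i
  ((inst.C i).sort  (· ≤ ·))[k]?

/-- Number of agents receiving their `k`-th (0-indexed) greatest good. -/
noncomputable def nPlus (inst : LexInstance N M) (A : N → Finset M) (k : ℕ) : ℕ :=
  (Finset.univ.filter fun i => (inst.kthGood i k).elim False (· ∈ A i)).card

/-- Number of agents receiving their `k`-th (0-indexed) least chore. -/
noncomputable def nMinus (inst : LexInstance N M) (A : N → Finset M) (k : ℕ) : ℕ :=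
  (Finset.univ.filter fun i => (inst.kthChore i k).elim False (· ∈ A i)).card

/-- The rank signature `(n_1^+, …, n_m^+, n_1^-, …, n_m^-)` of an allocation. -/
noncomputable def signature (inst : LexInstance N M) (A : N → Finset M) : List ℕ :=
  ((List.range (Fintype.card M)).map fun k => inst.nPlus A k) ++
    ((List.range (Fintype.card M)).map fun k => inst.nMinus A k)

/-- Rank-maximality: the signature is lexicographically maximal over allocations. -/
def RankMaximal (inst : LexInstance N M) (A : N → Finset M) : Prop :=
  inst.IsAllocation A ∧ ∀ B : N → Finset M, inst.IsAllocation B →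
    ¬ List.Lex (· < ·) (inst.signature A) (inst.signature B)

end LexInstance

/-- The set of the `k` greatest (most important) elements of `S` under `L`. -/
def topK {M : Type} [DecidableEq M] (L : LinearOrder M) (S : Finset M) (k : ℕ) :
    Finset M :=
  letI := L
  S.filter fun o => (S.filter fun o' => o < o').card < k

/-- Build a linear order on `Fin m` from an injective ranking function
(larger value = more important). -/
def mkOrd {m : ℕ} (f : Fin m → ℕ) (hf : Function.Injective f) : LinearOrder (Fin m) :=
  LinearOrder.lift' f hf

section Aux

variable {N M : Type} [Fintype N] [Fintype M] [DecidableEq M]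

/-- The `k` greatest elements of `S` under `L`, built greedily. -/
noncomputable def myTop (L : LinearOrder M) : ℕ → Finset M → Finset M
  | 0, _ => ∅
  | k+1, S =>
    if h : S.Nonempty then
      insert (@Finset.max' M L S h) (myTop L k (S.erase (@Finset.max' M L S h)))
    else ∅

lemma myTop_subset (L : LinearOrder M) : ∀ (k : ℕ) (S : Finset M), myTop L k S ⊆ S
  | 0, S => by simp [myTop]
  | k+1, S => by
    by_cases h : S.Nonempty
    · simp only [myTop, dif_pos h]
      exact Finset.insert_subset (@Finset.max'_mem M L S h)
        ((myTop_subset L k _).trans (Finset.erase_subset _ _))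
    · simp [myTop, h]

lemma myTop_card (L : LinearOrder M) : ∀ (k : ℕ) (S : Finset M),
    (myTop L k S).card = min k S.card
  | 0, S => by simp [myTop]
  | k+1, S => by
    by_cases h : S.Nonempty
    · simp only [myTop, dif_pos h]
      have hnm : @Finset.max' M L S h ∉ myTop L k (S.erase (@Finset.max' M L S h)) :=
        fun hmem => (Finset.ne_of_mem_erase (myTop_subset L k _ hmem)) rfl
      rw [Finset.card_insert_of_notMem hnm, myTop_card L k,
        Finset.card_erase_of_mem (@Finset.max'_mem M L S h)]
      have h1 : 1 ≤ S.card := Finset.card_pos.mpr h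
      omega
    · have : S = ∅ := Finset.not_nonempty_iff_eq_empty.mp h
      simp [myTop, h, this]

lemma myTop_dom (L : LinearOrder M) : ∀ (k : ℕ) (S : Finset M), ∀ t ∈ myTop L k S,
    ∀ s ∈ S, s ∉ myTop L k S → L.lt s t
  | 0, S => by simp [myTop]
  | k+1, S => by
    letI := L
    by_cases h : S.Nonempty
    · simp only [myTop, dif_pos h]
      intro t ht s hs hns
      rw [Finset.mem_insert] at ht
      have hsne : s ≠ S.max' h := fun he => hns (by rw [Finset.mem_insert]; exact Or.inl he)
      have hsrec : s ∉ myTop L k (S.erase (S.max' h)) :=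
        fun he => hns (by rw [Finset.mem_insert]; exact Or.inr he)
      rcases ht with rfl | ht
      · exact lt_of_le_of_ne (Finset.le_max' S s hs) hsne
      · exact myTop_dom L k _ t ht s (Finset.mem_erase.mpr ⟨hsne, hs⟩) hsrec
    · simp [myTop, h]

/-- Sequential assignment: each agent in the list takes its least-important
remaining chore. -/
noncomputable def chA (inst : LexInstance N M) : List N → Finset M → N → Finset M
  | [], _ => fun _ => ∅
  | h :: rest, R =>
    if hR : R.Nonempty then
      fun j =>
        (if j = h then {@Finset.min' M (inst.ord h) R hR} else ∅) ∪
          chA inst rest (R.erase (@Finset.min' M (inst.ord h) R hR)) j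
    else fun _ => ∅

lemma chA_cons (inst : LexInstance N M) (h : N) (rest : List N) (R : Finset M)
    (hR : R.Nonempty) (j : N) :
    chA inst (h :: rest) R j =
      (if j = h then {@Finset.min' M (inst.ord h) R hR} else ∅) ∪
        chA inst rest (R.erase (@Finset.min' M (inst.ord h) R hR)) j := by
  simp only [chA, dif_pos hR]

lemma chA_subset (inst : LexInstance N M) : ∀ (l : List N) (R : Finset M) (j : N),
    chA inst l R j ⊆ R
  | [], R, j => by simp [chA]
  | h :: rest, R, j => by
    by_cases hR : R.Nonempty
    · simp only [chA, dif_pos hR]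
      apply Finset.union_subset
      · split
        · simp [Finset.singleton_subset_iff, @Finset.min'_mem M (inst.ord h) R hR]
        · simp
      · exact (chA_subset inst rest _ j).trans (Finset.erase_subset _ _)
    · simp [chA, hR]

lemma chA_not_mem (inst : LexInstance N M) : ∀ (l : List N) (R : Finset M) {j : N},
    j ∉ l → chA inst l R j = ∅
  | [], R, j, _ => by simp [chA]
  | h :: rest, R, j, hj => by
    have hj1 : j ≠ h := fun he => hj (by simp [he])
    have hj2 : j ∉ rest := fun he => hj (by simp [he])
    by_cases hR : R.Nonempty
    · simp only [chA, dif_pos hR, if_neg hj1, chA_not_mem inst rest _ hj2,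
        Finset.empty_union]
    · simp [chA, hR]

lemma chA_unique (inst : LexInstance N M) : ∀ (l : List N) (R : Finset M) (j : N),
    l.Nodup → ∀ a ∈ chA inst l R j, ∀ b ∈ chA inst l R j, a = b
  | [], R, j, _ => by simp [chA]
  | h :: rest, R, j, hnd => by
    have hnd1 : h ∉ rest := (List.nodup_cons.mp hnd).1
    have hnd2 : rest.Nodup := (List.nodup_cons.mp hnd).2
    by_cases hR : R.Nonempty
    · simp only [chA, dif_pos hR]
      by_cases hj : j = h
      · rw [if_pos hj, hj, chA_not_mem inst rest _ hnd1, Finset.union_empty]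
        intro a ha b hb
        rw [Finset.mem_singleton] at ha hb
        rw [ha, hb]
      · rw [if_neg hj, Finset.empty_union]
        exact chA_unique inst rest _ j hnd2
    · simp [chA, hR]

lemma chA_cover (inst : LexInstance N M) : ∀ (l : List N) (R : Finset M),
    R.card ≤ l.length → ∀ o ∈ R, ∃ j ∈ l, o ∈ chA inst l R j
  | [], R, hc, o, ho => by
    simp only [List.length_nil, Nat.le_zero, Finset.card_eq_zero] at hc
    rw [hc] at ho; simp at ho
  | h :: rest, R, hc, o, ho => by
    have hR : R.Nonempty := ⟨o, ho⟩
    set c := @Finset.min' M (inst.ord h) R hR with hcdef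
    by_cases hoc : o = c
    · refine ⟨h, by simp, ?_⟩
      rw [chA_cons inst h rest R hR, if_pos rfl]
      exact Finset.mem_union_left _ (by rw [Finset.mem_singleton]; exact hoc)
    · have ho' : o ∈ R.erase c := Finset.mem_erase.mpr ⟨hoc, ho⟩
      have hc' : (R.erase c).card ≤ rest.length := by
        rw [Finset.card_erase_of_mem (@Finset.min'_mem M (inst.ord h) R hR)]
        simp only [List.length_cons] at hc
        omega
      obtain ⟨j, hj, hoj⟩ := chA_cover inst rest (R.erase c) hc' o ho'
      refine ⟨j, by simp [hj], ?_⟩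
      simp only [chA, dif_pos hR, Finset.mem_union]
      exact Or.inr hoj

lemma chA_nonempty (inst : LexInstance N M) : ∀ (l : List N) (R : Finset M),
    l.length ≤ R.card → ∀ j ∈ l, (chA inst l R j).Nonempty
  | [], R, hc, j, hj => by simp at hj
  | h :: rest, R, hc, j, hj => by
    have hR : R.Nonempty := by
      rw [← Finset.card_pos]
      simp only [List.length_cons] at hc
      omega
    set c := @Finset.min' M (inst.ord h) R hR with hcdef
    simp only [chA, dif_pos hR]
    rcases List.mem_cons.mp hj with rfl | hj'
    · exact ⟨c, by simp; exact Or.inl rfl⟩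
    · have hc' : rest.length ≤ (R.erase c).card := by
        rw [Finset.card_erase_of_mem (@Finset.min'_mem M (inst.ord h) R hR)]
        simp only [List.length_cons] at hc
        omega
      obtain ⟨x, hx⟩ := chA_nonempty inst rest (R.erase c) hc' j hj'
      exact ⟨x, Finset.mem_union_right _ hx⟩

lemma chA_disjoint (inst : LexInstance N M) : ∀ (l : List N) (R : Finset M) {j j' : N},
    j ≠ j' → Disjoint (chA inst l R j) (chA inst l R j')
  | [], R, j, j', _ => by simp [chA]
  | h :: rest, R, j, j', hne => by
    by_cases hR : R.Nonempty
    · simp only [chA, dif_pos hR]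
      set c := @Finset.min' M (inst.ord h) R hR with hcdef
      have hcR : c ∉ R.erase c := Finset.notMem_erase _ _
      have hrec : Disjoint (chA inst rest (R.erase c) j) (chA inst rest (R.erase c) j') :=
        chA_disjoint inst rest _ hne
      have hsing : ∀ j₀ j₁ : N, j₀ ≠ j₁ →
          Disjoint (if j₀ = h then ({c} : Finset M) else ∅)
            (if j₁ = h then ({c} : Finset M) else ∅) := by
        intro j₀ j₁ h01
        split
        · next h0 =>
            have : j₁ ≠ h := fun he => h01 (h0.trans he.symm)
            rw [if_neg this]; exact Finset.disjoint_empty_right _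
        · exact Finset.disjoint_empty_left _
      have hsr : ∀ j₀ j₁ : N, Disjoint (if j₀ = h then ({c} : Finset M) else ∅)
          (chA inst rest (R.erase c) j₁) := by
        intro j₀ j₁
        split
        · exact Finset.disjoint_singleton_left.mpr
            (fun hmem => hcR (chA_subset inst rest _ j₁ hmem))
        · exact Finset.disjoint_empty_left _
      apply Finset.disjoint_union_left.mpr
      constructor
      · apply Finset.disjoint_union_right.mpr
        exact ⟨hsing j j' hne, hsr j j'⟩
      · apply Finset.disjoint_union_right.mpr
        exact ⟨(hsr j' j).symm, hrec⟩
    · simp [chA, hR]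

variable {inst : LexInstance N M}

lemma choresC (hch : inst.ChoresOnly) (i : N) : inst.C i = Finset.univ := by
  simp [LexInstance.C, hch i]

lemma spref_mk (hch : inst.ChoresOnly) {i : N} {X Y : Finset M} {c : M}
    (h1 : c ∈ Y) (h2 : c ∉ X) (h3 : ∀ o ∈ X, inst.imp i o c → o ∈ Y) :
    inst.SPref i X Y := by
  right
  refine ⟨c, ?_, fun o ho himp => h3 o (Finset.mem_inter.mp ho).1 himp⟩
  simp [choresC hch, Finset.mem_sdiff, h1, h2]

lemma wpref_empty_left (hch : inst.ChoresOnly) (i : N) (Y : Finset M) :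
    inst.WPref i ∅ Y := by
  rcases Y.eq_empty_or_nonempty with h | ⟨c, hc⟩
  · exact Or.inr h.symm
  · exact Or.inl (spref_mk hch hc (by simp) (by simp))

lemma wpref_empty_right (hch : inst.ChoresOnly) {i : N} {Z : Finset M}
    (h : inst.WPref i Z ∅) : Z = ∅ := by
  rcases h with h | h
  · rcases h with ⟨g, hg, -⟩ | ⟨c, hc, -⟩
    · rw [hch i] at hg; simp at hg
    · simp at hc
  · exact h

lemma not_spref_self {i : N} {X : Finset M} : ¬ inst.SPref i X X := by
  rintro (⟨g, hg, -⟩ | ⟨c, hc, -⟩)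
  · simp at hg
  · simp at hc

lemma wpref_singleton (hch : inst.ChoresOnly) {i : N} {Z : Finset M} {c : M}
    (h : inst.WPref i Z {c}) :
    Z = {c} ∨ (c ∉ Z ∧ ∀ o ∈ Z, ¬ (inst.ord i).lt c o) := by
  letI := inst.ord i
  rcases h with h | h
  · rcases h with ⟨g, hg, -⟩ | ⟨c', hc', hcond⟩
    · rw [hch i] at hg; simp at hg
    · simp only [choresC hch, Finset.univ_inter, Finset.mem_sdiff,
        Finset.mem_singleton] at hc'
      obtain ⟨hceq, hcZ⟩ := hc'
      rw [hceq] at hcond hcZ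
      right
      refine ⟨hcZ, fun o ho hlt => ?_⟩
      have h2 := hcond o (by simp [choresC hch, ho]) hlt
      rw [Finset.mem_singleton] at h2
      rw [h2] at hlt
      exact lt_irrefl _ hlt
  · exact Or.inl h

/-- Core lemma for Pareto optimality: under weak improvement and coverage, the
bundles of agents in the list are forced. -/
lemma chA_forced (hch : inst.ChoresOnly) (B : N → Finset M) :
    ∀ (l : List N) (R : Finset M), l.Nodup →
      (∀ j ∈ l, inst.WPref j (B j) (chA inst l R j)) →
      (∀ o ∈ R, ∃ j ∈ l, o ∈ B j) →
      ∀ j ∈ l, B j = chA inst l R j := by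
  intro l
  induction l with
  | nil => intro R _ _ _ j hj; simp at hj
  | cons h rest ih =>
    intro R hnd H1 H2 j hj
    have hnd1 : h ∉ rest := (List.nodup_cons.mp hnd).1
    have hnd2 : rest.Nodup := (List.nodup_cons.mp hnd).2
    by_cases hR : R.Nonempty
    · set c := @Finset.min' M (inst.ord h) R hR with hcdef
      have hchh : chA inst (h :: rest) R h = {c} := by
        rw [chA_cons inst h rest R hR, if_pos rfl, chA_not_mem inst rest _ hnd1,
          Finset.union_empty]
      have hcharest : ∀ j' ∈ rest, chA inst (h :: rest) R j' =
          chA inst rest (R.erase c) j' := by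
        intro j' hj'
        have : j' ≠ h := fun he => hnd1 (he ▸ hj')
        rw [chA_cons inst h rest R hR, if_neg this, Finset.empty_union]
      have hWh : inst.WPref h (B h) {c} := hchh ▸ H1 h (by simp)
      rcases wpref_singleton hch hWh with hBh | ⟨hcB, hall⟩
      · -- case (a): B h = {c}
        have H2' : ∀ o ∈ R.erase c, ∃ j' ∈ rest, o ∈ B j' := by
          intro o ho
          obtain ⟨hoc, hoR⟩ := Finset.mem_erase.mp ho
          obtain ⟨j', hj', hoj'⟩ := H2 o hoR
          rcases List.mem_cons.mp hj' with rfl | hj''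
          · rw [hBh, Finset.mem_singleton] at hoj'; exact absurd hoj' hoc
          · exact ⟨j', hj'', hoj'⟩
        have H1' : ∀ j' ∈ rest, inst.WPref j' (B j') (chA inst rest (R.erase c) j') := by
          intro j' hj'
          have := H1 j' (by simp [hj'])
          rwa [hcharest j' hj'] at this
        rcases List.mem_cons.mp hj with rfl | hj'
        · rw [hBh, hchh]
        · rw [hcharest j hj']
          exact ih (R.erase c) hnd2 H1' H2' j hj'
      · -- case (b): impossible
        exfalso
        have hBhR : ∀ x ∈ R, x ∉ B h := by
          letI := inst.ord h
          intro x hx hxB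
          have h1 : c ≤ x := Finset.min'_le R x hx
          have h2 : ¬ c < x := hall x hxB
          have : x = c := le_antisymm (not_lt.mp h2) h1
          exact hcB (this ▸ hxB)
        have H2' : ∀ o ∈ R.erase c, ∃ j' ∈ rest, o ∈ B j' := by
          intro o ho
          obtain ⟨hoc, hoR⟩ := Finset.mem_erase.mp ho
          obtain ⟨j', hj', hoj'⟩ := H2 o hoR
          rcases List.mem_cons.mp hj' with rfl | hj''
          · exact absurd hoj' (hBhR o hoR)
          · exact ⟨j', hj'', hoj'⟩
        have H1' : ∀ j' ∈ rest, inst.WPref j' (B j') (chA inst rest (R.erase c) j') := by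
          intro j' hj'
          have := H1 j' (by simp [hj'])
          rwa [hcharest j' hj'] at this
        have hall' := ih (R.erase c) hnd2 H1' H2'
        obtain ⟨j', hj', hcj'⟩ := H2 c (@Finset.min'_mem M (inst.ord h) R hR)
        rcases List.mem_cons.mp hj' with rfl | hj''
        · exact hcB hcj'
        · have := hall' j' hj'' ▸ hcj'
          exact Finset.notMem_erase c R (chA_subset inst rest _ j' this)
    · -- R empty: all bundles must be empty
      have hchall : ∀ j' , chA inst (h :: rest) R j' = ∅ := by
        intro j'; simp only [chA, dif_neg hR]
      have := H1 j hj
      rw [hchall j] at this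
      rw [wpref_empty_right hch this, hchall j]

end Aux

/-- every chores-only lexicographic instance admits a complete
allocation that is simultaneously EFX and Pareto optimal. -/
theorem efx_po_exists_chores
    {N M : Type} [Fintype N] [Fintype M] [DecidableEq M] [Nonempty N]
    (inst : LexInstance N M) (hch : inst.ChoresOnly) :
    ∃ A : N → Finset M, inst.IsAllocation A ∧ inst.EFX A ∧ inst.ParetoOptimal A := by
  classical
  obtain ⟨i0⟩ := (inferInstance : Nonempty N)
  set others : List N := (Finset.univ.erase i0).toList with hoth
  have hmem : ∀ j : N, j ∈ others ↔ j ≠ i0 := by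
    intro j; simp [hoth, Finset.mem_toList]
  have hnd : others.Nodup := Finset.nodup_toList _
  set T : Finset M := myTop (inst.ord i0) others.length Finset.univ with hTdef
  have hTcard : T.card = min others.length (Fintype.card M) := by
    rw [hTdef, myTop_card, Finset.card_univ]
  have hTle : T.card ≤ others.length := by rw [hTcard]; exact Nat.min_le_left _ _
  have hdom : ∀ t ∈ T, ∀ s ∉ T, (inst.ord i0).lt s t := by
    intro t ht s hs
    exact myTop_dom (inst.ord i0) others.length Finset.univ t ht s (Finset.mem_univ s) hs
  set A : N → Finset M := fun j => if j = i0 then Tᶜ else chA inst others T j with hAdef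
  have hAi0 : A i0 = Tᶜ := by simp [hAdef]
  have hAj : ∀ j : N, j ≠ i0 → A j = chA inst others T j := by
    intro j hj; simp [hAdef, hj]
  have hsubT : ∀ j, chA inst others T j ⊆ T := fun j => chA_subset inst others T j
  refine ⟨A, ⟨?_, ?_⟩, ?_, ?_⟩
  · -- disjointness
    intro i j hij
    by_cases hi : i = i0
    · have hj : j ≠ i0 := fun he => hij (hi.trans he.symm)
      rw [hi, hAi0, hAj j hj]
      exact Finset.disjoint_left.mpr
        (fun x hx hx2 => (Finset.mem_compl.mp hx) (hsubT j hx2))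
    · by_cases hj : j = i0
      · subst hj
        rw [hAi0, hAj i hi]
        exact (Finset.disjoint_left.mpr
          (fun x hx hx2 => (Finset.mem_compl.mp hx) (hsubT i hx2))).symm
      · rw [hAj i hi, hAj j hj]
        exact chA_disjoint inst others T hij
  · -- coverage
    intro o
    by_cases hoT : o ∈ T
    · obtain ⟨j, hj, hoj⟩ := chA_cover inst others T hTle o hoT
      have hji0 : j ≠ i0 := (hmem j).mp hj
      exact ⟨j, by rw [hAj j hji0]; exact hoj⟩
    · exact ⟨i0, by rw [hAi0]; exact Finset.mem_compl.mpr hoT⟩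
  · -- EFX
    intro i h
    constructor
    · intro o ho
      rw [hch i] at ho
      simp at ho
    · intro o ho
      have hoAi : o ∈ A i := (Finset.mem_inter.mp ho).1
      by_cases hi : i = i0
      · rw [hi] at hoAi ⊢
        rw [hAi0] at hoAi ⊢
        by_cases hh : h = i0
        · rw [hh, hAi0]
          exact Or.inl (spref_mk hch hoAi (Finset.notMem_erase o Tᶜ)
            (fun o' ho' _ => Finset.mem_of_mem_erase ho'))
        · rw [hAj h hh]
          have hTc : T.card = others.length := by
            have hlt : T.card < Fintype.card M := by
              have hss : T ⊂ Finset.univ :=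
                ⟨Finset.subset_univ T,
                  fun hsub => (Finset.mem_compl.mp hoAi) (hsub (Finset.mem_univ o))⟩
              simpa [Finset.card_univ] using Finset.card_lt_card hss
            omega
          obtain ⟨x, hx⟩ :=
            chA_nonempty inst others T (le_of_eq hTc.symm) h ((hmem h).mpr hh)
          have hsing : chA inst others T h = {x} :=
            Finset.eq_singleton_iff_unique_mem.mpr
              ⟨hx, fun y hy => chA_unique inst others T h hnd y hy x hx⟩
          rw [hsing]
          refine Or.inl (spref_mk hch (Finset.mem_singleton_self x) ?_ ?_)
          · intro hmem2
            exact (Finset.mem_compl.mp (Finset.mem_of_mem_erase hmem2)) (hsubT h hx)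
          · intro o' ho' himp
            exfalso
            have ho'T : o' ∉ T := Finset.mem_compl.mp (Finset.mem_of_mem_erase ho')
            exact @lt_asymm M (inst.ord i0).toPartialOrder.toPreorder o' x
              (hdom x (hsubT h hx) o' ho'T) himp
      · rw [hAj i hi] at hoAi ⊢
        have herase : (chA inst others T i).erase o = ∅ := by
          apply Finset.eq_empty_iff_forall_notMem.mpr
          intro y hy
          obtain ⟨hyne, hymem⟩ := Finset.mem_erase.mp hy
          exact hyne (chA_unique inst others T i hnd y hymem o hoAi)
        rw [herase]
        exact wpref_empty_left hch i (A h)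
  · -- Pareto optimality
    rintro ⟨B, hBalloc, hW, h, hS⟩
    have hBi0T : ∀ t ∈ T, t ∉ B i0 := by
      have hwi0 := hW i0
      rw [hAi0] at hwi0
      rcases hwi0 with hsp | heq
      · rcases hsp with ⟨g, hg, -⟩ | ⟨c, hc, hcond⟩
        · rw [hch i0] at hg; simp at hg
        · intro t ht htB
          simp only [choresC hch, Finset.univ_inter, Finset.mem_sdiff] at hc
          obtain ⟨hcTc, hcB⟩ := hc
          have hcT : c ∉ T := Finset.mem_compl.mp hcTc
          have h2 := hcond t (by simp [choresC hch, htB]) (hdom t ht c hcT)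
          exact (Finset.mem_compl.mp h2) ht
      · intro t ht htB
        rw [heq] at htB
        exact (Finset.mem_compl.mp htB) ht
    have H1 : ∀ j ∈ others, inst.WPref j (B j) (chA inst others T j) := by
      intro j hj
      have hwj := hW j
      rwa [hAj j ((hmem j).mp hj)] at hwj
    have H2 : ∀ o ∈ T, ∃ j ∈ others, o ∈ B j := by
      intro o hoT
      obtain ⟨j, hj⟩ := hBalloc.2 o
      have hji0 : j ≠ i0 := fun he => hBi0T o hoT (he ▸ hj)
      exact ⟨j, (hmem j).mpr hji0, hj⟩
    have hforced := chA_forced hch B others T hnd H1 H2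
    have hBeq : ∀ j, B j = A j := by
      intro j
      by_cases hj : j = i0
      · rw [hj, hAi0]
        apply Finset.Subset.antisymm
        · intro x hx
          exact Finset.mem_compl.mpr (fun hxT => hBi0T x hxT hx)
        · intro x hx
          obtain ⟨j', hj'⟩ := hBalloc.2 x
          by_cases hj'i : j' = i0
          · exact hj'i ▸ hj'
          · exfalso
            rw [hforced j' ((hmem j').mpr hj'i)] at hj'
            exact (Finset.mem_compl.mp hx) (hsubT j' hj')
      · rw [hAj j hj, hforced j ((hmem j).mpr hj)]
    rw [hBeq h] at hS
    exact not_spref_self hS
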